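/- Let γ = [[a, b], [c, d]] ∈ SL(2, ℂ) with c ≠ 0 and a + d ≠ 0, acting on ℂ by Möbius transformation, and let D be a line in ℂ. If γ(D) = D (as a subset of ℂ ∪ {∞}, with the line D not passing through the pole -d/c being impossible since γ⁻¹(∞) ∈ D), then a/c ∈ D, -d/c ∈ D, and (a+d)² ∈ ℝ. Conversely, if a/c ∈ D, -d/c ∈ D, D = {z ∈ ℂ : Im(cz/(a+d)) = Im(a/(a+d))}, and (a+d)² ∈ ℝ, then γ(D) = D. -/

import Mathlib

theorem mobius_line_invariance
    (a b c d : ℂ) (hdet : a * d - b * c = 1) (hc : c ≠ 0) (htr : a + d ≠ 0)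
    (D : Set ℂ)
    (hD : ∃ z₀ w : ℂ, w ≠ 0 ∧ D = {z : ℂ | ∃ t : ℝ, z = z₀ + (t : ℂ) * w}) :
    (((fun z : ℂ => (a * z + b) / (c * z + d)) '' (D \ {-d / c}) ∪ {a / c} = D) →
        (a / c ∈ D ∧ -d / c ∈ D ∧
          D = {z : ℂ | (c * z / (a + d)).im = (a / (a + d)).im} ∧ ((a + d) ^ 2).im = 0)) ∧
      ((a / c ∈ D ∧ -d / c ∈ D ∧
          D = {z : ℂ | (c * z / (a + d)).im = (a / (a + d)).im} ∧ ((a + d) ^ 2).im = 0) →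
        (fun z : ℂ => (a * z + b) / (c * z + d)) '' (D \ {-d / c}) ∪ {a / c} = D) := by
  obtain ⟨z₀, w, hw, hDdef⟩ := hD
  set γ : ℂ → ℂ := fun z : ℂ => (a * z + b) / (c * z + d) with hγdef
  have hadc : a / c ≠ -d / c := by
    intro h
    apply htr
    field_simp at h
    linear_combination h
  -- characterization of the Im-description set
  have hdesc_char : ∀ z : ℂ,
      ((c * z / (a + d)).im = (a / (a + d)).im) ↔ ∃ t : ℝ, c * z = a + t * (a + d) := by
    intro z
    constructor
    · intro him
      have him0 : ((c * z - a) / (a + d)).im = 0 := by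
        rw [sub_div]
        simp [Complex.sub_im, him]
      refine ⟨((c * z - a) / (a + d)).re, ?_⟩
      have hζ : (c * z - a) / (a + d) = (((c * z - a) / (a + d)).re : ℂ) :=
        Complex.ext rfl (by simp [him0])
      field_simp at hζ
      linear_combination hζ
    · rintro ⟨t, ht⟩
      have h2 : c * z / (a + d) = a / (a + d) + t := by
        rw [ht]; field_simp
      rw [h2]; simp
  -- value of γ along the line
  have hγval : ∀ (z : ℂ) (t : ℝ), c * z = a + t * (a + d) → (t : ℂ) + 1 ≠ 0 →
      c * γ z = a + -1 / (((t : ℂ) + 1) * (a + d) ^ 2) * (a + d) ∧ c * z + d ≠ 0 := by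
    intro z t hz ht1
    have hden : c * z + d = ((t : ℂ) + 1) * (a + d) := by rw [hz]; ring
    have hden0 : c * z + d ≠ 0 := by rw [hden]; exact mul_ne_zero ht1 htr
    refine ⟨?_, hden0⟩
    rw [hγdef]
    simp only []
    rw [hden]
    field_simp
    linear_combination a*hz - hdet
  constructor
  · -- forward direction
    intro hEq
    have ha : a / c ∈ D := by
      rw [← hEq]; exact Set.mem_union_right _ rfl
    have hnopre : ∀ z : ℂ, c * z + d ≠ 0 → γ z ≠ a / c := by
      intro z hz hq
      rw [hγdef] at hq
      simp only [] at hq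
      rw [div_eq_div_iff hz hc] at hq
      apply one_ne_zero (α := ℂ)
      linear_combination -hdet - hq
    have hd : -d / c ∈ D := by
      by_contra hd
      have hden : ∀ z ∈ D, c * z + d ≠ 0 := by
        intro z hz hzz
        apply hd
        have : z = -d / c := by
          rw [eq_div_iff hc]; linear_combination hzz
        rwa [← this]
      rw [Set.diff_singleton_eq_self hd] at hEq
      have himg : γ '' D = D \ {a / c} := by
        ext x
        constructor
        · rintro ⟨z, hz, rfl⟩
          exact ⟨hEq ▸ Set.mem_union_left _ ⟨z, hz, rfl⟩, hnopre z (hden z hz)⟩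
        · rintro ⟨hx, hxne⟩
          rw [← hEq] at hx
          rcases hx with hx | hx
          · exact hx
          · exact absurd hx hxne
      have hDconn : IsPreconnected D := by
        have hr : D = Set.range (fun t : ℝ => z₀ + (t : ℂ) * w) := by
          rw [hDdef]; ext z; simp [Set.mem_range, eq_comm]
        rw [hr]
        exact isPreconnected_range (by continuity)
      have hcont : ContinuousOn γ D := by
        apply ContinuousOn.div
        · fun_prop
        · fun_prop
        · exact hden
      have hconn : IsPreconnected (γ '' D) := hDconn.image γ hcont
      set φ : ℂ → ℝ := fun z => ((z - z₀) / w).re with hφdef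
      have hφ : ∀ t : ℝ, φ (z₀ + (t : ℂ) * w) = t := by
        intro t
        rw [hφdef]
        simp only []
        rw [add_sub_cancel_left, mul_div_assoc, div_self hw, mul_one, Complex.ofReal_re]
      have hconnS : IsPreconnected (φ '' (γ '' D)) := hconn.image φ (Continuous.continuousOn (by fun_prop))
      have haD := ha
      rw [hDdef] at haD
      obtain ⟨t₀, ht₀⟩ := haD
      have hmem : ∀ s : ℝ, s ≠ t₀ → s ∈ φ '' (γ '' D) := by
        intro s hs
        refine ⟨z₀ + (s : ℂ) * w, ?_, hφ s⟩
        rw [himg]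
        refine ⟨hDdef ▸ ⟨s, rfl⟩, ?_⟩
        intro hcontra
        apply hs
        have : z₀ + (s : ℂ) * w = z₀ + (t₀ : ℂ) * w := by
          rw [← ht₀]; exact hcontra
        have h2 : ((s : ℂ) - t₀) * w = 0 := by linear_combination this
        rcases mul_eq_zero.mp h2 with h3 | h3
        · exact_mod_cast sub_eq_zero.mp h3
        · exact absurd h3 hw
      have hnot : t₀ ∉ φ '' (γ '' D) := by
        rintro ⟨x, hx, hφx⟩
        rw [himg] at hx
        obtain ⟨hxD, hxne⟩ := hx
        rw [hDdef] at hxD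
        obtain ⟨t, rfl⟩ := hxD
        rw [hφ] at hφx
        exact hxne (by rw [hφx, ← ht₀]; rfl)
      have hIcc := hconnS.Icc_subset (hmem (t₀ - 1) (by linarith)) (hmem (t₀ + 1) (by linarith))
      exact hnot (hIcc ⟨by linarith, by linarith⟩)
    -- line characterization from two points
    have haD := ha; have hdD := hd
    rw [hDdef] at haD hdD
    obtain ⟨s, hs⟩ := haD
    obtain ⟨u, hu⟩ := hdD
    have hsu : (u : ℂ) - s ≠ 0 := by
      intro h
      apply hadc
      have : (s : ℂ) = u := by linear_combination -h
      rw [hs, hu, this]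
    have husr : u - s ≠ 0 := by
      intro h
      apply hsu
      push_cast [sub_eq_zero] at h ⊢
      exact_mod_cast h
    have hkey : ∀ t : ℝ, c * (z₀ + (t : ℂ) * w) = a + (((s - t) / (u - s) : ℝ) : ℂ) * (a + d) := by
      intro t
      have h1 : c * (z₀ + (s : ℂ) * w) = a := by
        rw [← hs]; field_simp
      have h2 : c * (z₀ + (u : ℂ) * w) = -d := by
        rw [← hu]; field_simp
      push_cast
      field_simp
      linear_combination ((u:ℂ) - s) * h1 + ((t:ℂ) - s) * (h2 - h1)
    have hchar : ∀ z : ℂ, z ∈ D ↔ ∃ t : ℝ, c * z = a + (t : ℂ) * (a + d) := by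
      intro z
      rw [hDdef]
      constructor
      · rintro ⟨t, rfl⟩
        exact ⟨(s - t) / (u - s), hkey t⟩
      · rintro ⟨t', ht'⟩
        refine ⟨s - t' * (u - s), ?_⟩
        apply mul_left_cancel₀ hc
        have hq : (s - (s - t' * (u - s))) / (u - s) = t' := by
          field_simp
          ring
        rw [hkey (s - t' * (u - s)), hq]
        exact ht'
    -- third point: γ (a/c) ∈ D
    have hγac : γ (a / c) ∈ D := by
      rw [← hEq]
      exact Set.mem_union_left _ ⟨a / c, ⟨ha, hadc⟩, rfl⟩
    have h0 : c * (a / c) = a + ((0 : ℝ) : ℂ) * (a + d) := by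
      push_cast; field_simp; ring
    obtain ⟨hval, -⟩ := hγval (a / c) 0 h0 (by norm_num)
    obtain ⟨t, ht⟩ := (hchar _).mp hγac
    have he : (t : ℂ) * (a + d) ^ 2 = -1 := by
      rw [ht] at hval
      push_cast at hval
      field_simp at hval
      have h5 : ((t : ℂ) * (a + d) ^ 2 + 1) * (a + d) = 0 := by linear_combination (a + d) * hval
      rcases mul_eq_zero.mp h5 with h6 | h6
      · linear_combination h6
      · exact absurd h6 htr
    have ht0 : t ≠ 0 := by
      intro h
      rw [h] at he
      norm_num at he
    have him : ((a + d) ^ 2).im = 0 := by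
      have h2 : (a + d) ^ 2 = ((-1 / t : ℝ) : ℂ) := by
        push_cast
        rw [eq_div_iff (by exact_mod_cast ht0 : (t:ℂ) ≠ 0)]
        linear_combination he
      rw [h2]
      simp
    exact ⟨ha, hd, Set.ext fun z => (hchar z).trans (hdesc_char z).symm, him⟩
  · -- backward direction
    rintro ⟨ha, hd, hDdesc, him⟩
    have hchar : ∀ z : ℂ, z ∈ D ↔ ∃ t : ℝ, c * z = a + (t : ℂ) * (a + d) := by
      intro z
      rw [hDdesc]
      exact hdesc_char z
    set σ := ((a + d) ^ 2).re with hσdef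
    have hσc : (a + d) ^ 2 = (σ : ℂ) := Complex.ext rfl (by simp [him])
    have hσ0 : σ ≠ 0 := by
      intro h
      apply pow_ne_zero 2 htr
      rw [hσc, h]; simp
    ext x
    constructor
    · rintro (⟨z, ⟨hzD, hzne⟩, rfl⟩ | hx)
      · obtain ⟨t, ht⟩ := (hchar z).mp hzD
        have ht1 : (t : ℂ) + 1 ≠ 0 := by
          intro h
          apply hzne
          have htm : (t : ℂ) = -1 := by linear_combination h
          show z = -d / c
          rw [eq_div_iff hc]
          rw [htm] at ht
          linear_combination ht
        obtain ⟨hval, hden0⟩ := hγval z t ht ht1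
        refine (hchar _).mpr ⟨-1 / ((t + 1) * σ), ?_⟩
        have hcast : ((-1 / ((t + 1) * σ) : ℝ) : ℂ) = -1 / (((t : ℂ) + 1) * (a + d) ^ 2) := by
          push_cast
          rw [← hσc]
        rw [hval, hcast]
      · have hx' : x = a / c := hx
        refine (hchar x).mpr ⟨0, ?_⟩
        rw [hx']
        push_cast
        field_simp
        ring
    · intro hx
      obtain ⟨t', ht'⟩ := (hchar x).mp hx
      by_cases h0 : t' = 0
      · right
        rw [h0] at ht'
        push_cast at ht'
        show x = a / c
        rw [eq_div_iff hc]
        linear_combination ht'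
      · left
        set t : ℝ := -1 / (t' * σ) - 1 with htdef
        have h1t : t + 1 = -1 / (t' * σ) := by rw [htdef]; ring
        have ht'σ : t' * σ ≠ 0 := mul_ne_zero h0 hσ0
        have h1t0 : t + 1 ≠ 0 := by
          rw [h1t]
          exact div_ne_zero (by norm_num) ht'σ
        have ht1c : (t : ℂ) + 1 ≠ 0 := by exact_mod_cast h1t0
        have hz : c * ((a + (t : ℂ) * (a + d)) / c) = a + (t : ℂ) * (a + d) := by
          field_simp
        refine ⟨(a + (t : ℂ) * (a + d)) / c, ⟨(hchar _).mpr ⟨t, hz⟩, ?_⟩, ?_⟩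
        · intro hmem
          have hmem' : (a + (t : ℂ) * (a + d)) / c = -d / c := hmem
          rw [div_eq_div_iff hc hc] at hmem'
          have h2 : ((t : ℂ) + 1) * (a + d) = 0 := by
            apply mul_right_cancel₀ hc
            rw [zero_mul]
            linear_combination hmem'
          rcases mul_eq_zero.mp h2 with h3 | h3
          · exact ht1c h3
          · exact htr h3
        · obtain ⟨hval, hden0⟩ := hγval _ t hz ht1c
          apply mul_left_cancel₀ hc
          rw [hval, ht']
          have hr : (-1 : ℝ) / ((t + 1) * σ) = t' := by
            rw [h1t]
            field_simp
          have hcast : (-1 : ℂ) / (((t : ℂ) + 1) * (a + d) ^ 2) = (t' : ℂ) := by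
            rw [hσc, ← hr]
            push_cast
            ring
          rw [hcast]
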